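/- arXiv:2003.03258 — 2 statements merged into one kernel-verified Lean document; each statement's English description precedes it below -/
import Mathlib

section
/- In any simple graph G, Λ₂ := ∑_{{st,uv}∈Q} (a_{su}+a_{sv}+a_{tu}+a_{tv})(k_s+k_t+k_u+k_v) satisfies Λ₂ = Λ₁ + ∑_{st∈E} (k_s+k_t)( (k_s−1)(k_t−1) − |Γ(s)∩Γ(t)| ), where Λ₁ = ∑_{{st,uv}∈Q} [a_{su}(k_t+k_v)+a_{sv}(k_t+k_u)+a_{tu}(k_s+k_v)+a_{tv}(k_s+k_u)]. -/
open Finset BigOperators SimpleGraph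

namespace CrossVar

variable {V : Type} [Fintype V] [DecidableEq V]

/-- Adjacency indicator `a_{xy}`. -/
def a (G : SimpleGraph V) [DecidableRel G.Adj] (x y : V) : ℚ := if G.Adj x y then 1 else 0

/-- Degree `k_v` as a rational number. -/
def deg (G : SimpleGraph V) [DecidableRel G.Adj] (v : V) : ℚ := (G.degree v : ℚ)

/-- Sum over the set `Q` of unordered pairs `{st, uv}` of vertex-disjoint (independent) edges of
`G` of a function `f s t u v` (intended to be invariant under `s ↔ t`, `u ↔ v` and
`(s,t) ↔ (u,v)`).  Each unordered pair of independent edges corresponds to exactly `8` ordered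
tuples `(s,t,u,v)`, whence the division by `8`. -/
def Qsum (G : SimpleGraph V) [DecidableRel G.Adj] (f : V → V → V → V → ℚ) : ℚ :=
  (∑ s, ∑ t, ∑ u, ∑ v,
    if G.Adj s t ∧ G.Adj u v ∧ s ≠ u ∧ s ≠ v ∧ t ≠ u ∧ t ≠ v then f s t u v else 0) / 8

/-- Sum over the unordered edges `{s,t} ∈ E` of `f s t` (intended for symmetric `f`);
each unordered edge corresponds to two ordered adjacent pairs, whence the division by `2`. -/
def edgeSum (G : SimpleGraph V) [DecidableRel G.Adj] (f : V → V → ℚ) : ℚ :=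
  (∑ s, ∑ t, if G.Adj s t then f s t else 0) / 2

/-- The number of subgraphs of `G` isomorphic to `F` (each unlabeled copy counted once). -/
noncomputable def copyCount {α : Type} (G : SimpleGraph V) (F : SimpleGraph α) : ℕ :=
  Nat.card {H : G.Subgraph // Nonempty (H.coe ≃g F)}

/-- `ξ(v)`: the sum of the degrees of the neighbours of `v`. -/
def xi (G : SimpleGraph V) [DecidableRel G.Adj] (v : V) : ℚ :=
  ∑ u ∈ G.neighborFinset v, deg G u

/-- The paw graph: a triangle `{0,1,2}` with a pendant edge `{2,3}`. -/
def pawGraph : SimpleGraph (Fin 4) :=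
  SimpleGraph.fromRel (fun x y => (x, y) ∈ [((0 : Fin 4), (1 : Fin 4)), (0, 2), (1, 2), (2, 3)])

/-- `C₃ ⊕ P₂`: the disjoint union of a triangle `{0,1,2}` and an edge `{3,4}`. -/
def triEdgeGraph : SimpleGraph (Fin 5) :=
  SimpleGraph.fromRel (fun x y => (x, y) ∈ [((0 : Fin 5), (1 : Fin 5)), (0, 2), (1, 2), (3, 4)])

set_option linter.unusedSectionVars false

-- counting lemma
lemma count_lem (G : SimpleGraph V) [DecidableRel G.Adj] {s u : V} (h : G.Adj s u) :
    (∑ t, ∑ v, if G.Adj s t ∧ G.Adj u v ∧ s ≠ u ∧ s ≠ v ∧ t ≠ u ∧ t ≠ v then (1:ℚ) else 0)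
    = (deg G s - 1) * (deg G u - 1)
        - ((G.neighborFinset s ∩ G.neighborFinset u).card : ℚ) := by
  set A := (G.neighborFinset s).erase u with hA
  set B := (G.neighborFinset u).erase s with hB
  have hcond : ∀ t v : V,
      (G.Adj s t ∧ G.Adj u v ∧ s ≠ u ∧ s ≠ v ∧ t ≠ u ∧ t ≠ v) ↔ (t ∈ A ∧ v ∈ B ∧ t ≠ v) := by
    intro t v
    simp only [hA, hB, mem_erase, mem_neighborFinset]
    constructor
    · rintro ⟨h1, h2, h3, h4, h5, h6⟩
      exact ⟨⟨h5, h1⟩, ⟨fun hv => h4 hv.symm, h2⟩, h6⟩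
    · rintro ⟨⟨h5, h1⟩, ⟨h4, h2⟩, h6⟩
      exact ⟨h1, h2, h.ne, fun hv => h4 hv.symm, h5, h6⟩
  have step1 : (∑ t, ∑ v, if G.Adj s t ∧ G.Adj u v ∧ s ≠ u ∧ s ≠ v ∧ t ≠ u ∧ t ≠ v then (1:ℚ) else 0)
      = ∑ t, ∑ v, if t ∈ A ∧ v ∈ B ∧ t ≠ v then (1:ℚ) else 0 := by
    refine Finset.sum_congr rfl fun t _ => Finset.sum_congr rfl fun v _ => ?_
    exact if_congr (hcond t v) rfl rfl
  rw [step1]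
  have inner : ∀ t : V, (∑ v, if t ∈ A ∧ v ∈ B ∧ t ≠ v then (1:ℚ) else 0)
      = (if t ∈ A then (B.card : ℚ) else 0) - (if t ∈ A ∧ t ∈ B then (1:ℚ) else 0) := by
    intro t
    by_cases ht : t ∈ A
    · simp only [ht, true_and, if_true]
      have : ∀ v : V, (if v ∈ B ∧ t ≠ v then (1:ℚ) else 0)
          = (if v ∈ B then (1:ℚ) else 0) - (if v = t then (if t ∈ B then (1:ℚ) else 0) else 0) := by
        intro v
        by_cases hvt : v = t
        · subst hvt; by_cases hv : v ∈ B <;> simp [hv]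
        · have htv : t ≠ v := fun e => hvt e.symm
          by_cases hv : v ∈ B <;> simp [hv, hvt, htv]
      rw [Finset.sum_congr rfl fun v _ => this v, Finset.sum_sub_distrib]
      congr 1
      · rw [Finset.sum_boole]
        congr 1
        simp [Finset.filter_mem_eq_inter]
      · rw [Finset.sum_ite_eq' Finset.univ t]
        simp
    · simp [ht]
  rw [Finset.sum_congr rfl fun t _ => inner t, Finset.sum_sub_distrib]
  have c1 : (∑ t, if t ∈ A then (B.card : ℚ) else 0) = (A.card : ℚ) * B.card := by
    rw [Finset.sum_ite_mem, Finset.univ_inter, Finset.sum_const, nsmul_eq_mul]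
  have c2 : (∑ t, if t ∈ A ∧ t ∈ B then (1:ℚ) else 0) = ((A ∩ B).card : ℚ) := by
    rw [Finset.sum_boole]
    congr 2
    ext x
    simp [Finset.mem_inter]
  rw [c1, c2]
  have hAB : A ∩ B = G.neighborFinset s ∩ G.neighborFinset u := by
    ext x
    simp only [hA, hB, mem_inter, mem_erase, mem_neighborFinset]
    constructor
    · rintro ⟨⟨_, h1⟩, ⟨_, h2⟩⟩; exact ⟨h1, h2⟩
    · rintro ⟨h1, h2⟩
      exact ⟨⟨fun e => G.loopless.irrefl u (e ▸ h2), h1⟩, fun e => G.loopless.irrefl s (e ▸ h1), h2⟩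
  have hu : u ∈ G.neighborFinset s := by rwa [mem_neighborFinset]
  have hs' : s ∈ G.neighborFinset u := by rwa [mem_neighborFinset, adj_comm]
  have cA : (A.card : ℚ) = deg G s - 1 := by
    rw [hA, Finset.card_erase_of_mem hu,
      Nat.cast_sub (Finset.card_pos.mpr ⟨u, hu⟩ : 1 ≤ _)]
    simp only [deg, ← SimpleGraph.card_neighborFinset_eq_degree, Nat.cast_one]
  have cB : (B.card : ℚ) = deg G u - 1 := by
    rw [hB, Finset.card_erase_of_mem hs',
      Nat.cast_sub (Finset.card_pos.mpr ⟨s, hs'⟩ : 1 ≤ _)]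
    simp only [deg, ← SimpleGraph.card_neighborFinset_eq_degree, Nat.cast_one]
  rw [cA, cB, hAB]

lemma qcond_uv (G : SimpleGraph V) (s t u v : V) :
    (G.Adj s t ∧ G.Adj v u ∧ s ≠ v ∧ s ≠ u ∧ t ≠ v ∧ t ≠ u) ↔
    (G.Adj s t ∧ G.Adj u v ∧ s ≠ u ∧ s ≠ v ∧ t ≠ u ∧ t ≠ v) := by
  constructor <;> rintro ⟨h1, h2, h3, h4, h5, h6⟩ <;> exact ⟨h1, h2.symm, h4, h3, h6, h5⟩

lemma qcond_st (G : SimpleGraph V) (s t u v : V) :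
    (G.Adj t s ∧ G.Adj u v ∧ t ≠ u ∧ t ≠ v ∧ s ≠ u ∧ s ≠ v) ↔
    (G.Adj s t ∧ G.Adj u v ∧ s ≠ u ∧ s ≠ v ∧ t ≠ u ∧ t ≠ v) := by
  constructor <;> rintro ⟨h1, h2, h3, h4, h5, h6⟩ <;> exact ⟨h1.symm, h2, h5, h6, h3, h4⟩

theorem stmt17 (G : SimpleGraph V) [DecidableRel G.Adj] :
    Qsum G (fun s t u v =>
        (a G s u + a G s v + a G t u + a G t v) * (deg G s + deg G t + deg G u + deg G v)) =
      Qsum G (fun s t u v =>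
        a G s u * (deg G t + deg G v) + a G s v * (deg G t + deg G u)
          + a G t u * (deg G s + deg G v) + a G t v * (deg G s + deg G u))
      + edgeSum G (fun s t =>
          (deg G s + deg G t) *
            ((deg G s - 1) * (deg G t - 1)
              - ((G.neighborFinset s ∩ G.neighborFinset t).card : ℚ))) := by
  classical
  set k : V → ℚ := deg G with hk
  -- the base quadruple sum
  set T1 : ℚ := ∑ s, ∑ t, ∑ u, ∑ v,
      if G.Adj s t ∧ G.Adj u v ∧ s ≠ u ∧ s ≠ v ∧ t ≠ u ∧ t ≠ v
      then a G s u * (k s + k u) else 0 with hT1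
  -- symmetry: the u↔v swapped version
  have e2 : (∑ s, ∑ t, ∑ u, ∑ v,
      if G.Adj s t ∧ G.Adj u v ∧ s ≠ u ∧ s ≠ v ∧ t ≠ u ∧ t ≠ v
      then a G s v * (k s + k v) else 0) = T1 := by
    rw [hT1]
    refine Finset.sum_congr rfl fun s _ => Finset.sum_congr rfl fun t _ => ?_
    rw [Finset.sum_comm]
    refine Finset.sum_congr rfl fun u _ => Finset.sum_congr rfl fun v _ => ?_
    exact if_congr (qcond_uv G s t u v) rfl rfl
  -- symmetry: the s↔t swapped version
  have e3 : (∑ s, ∑ t, ∑ u, ∑ v,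
      if G.Adj s t ∧ G.Adj u v ∧ s ≠ u ∧ s ≠ v ∧ t ≠ u ∧ t ≠ v
      then a G t u * (k t + k u) else 0) = T1 := by
    rw [hT1, Finset.sum_comm]
    refine Finset.sum_congr rfl fun s _ => Finset.sum_congr rfl fun t _ =>
      Finset.sum_congr rfl fun u _ => Finset.sum_congr rfl fun v _ => ?_
    exact if_congr (qcond_st G s t u v) rfl rfl
  -- symmetry: both swaps
  have e4 : (∑ s, ∑ t, ∑ u, ∑ v,
      if G.Adj s t ∧ G.Adj u v ∧ s ≠ u ∧ s ≠ v ∧ t ≠ u ∧ t ≠ v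
      then a G t v * (k t + k v) else 0) = T1 := by
    rw [Finset.sum_comm]
    refine Eq.trans ?_ e2
    refine Finset.sum_congr rfl fun s _ => Finset.sum_congr rfl fun t _ =>
      Finset.sum_congr rfl fun u _ => Finset.sum_congr rfl fun v _ => ?_
    exact if_congr (qcond_st G s t u v) rfl rfl
  -- evaluate T1
  have hT1v : T1 = ∑ s, ∑ u, if G.Adj s u then
      (k s + k u) * ((k s - 1) * (k u - 1)
        - ((G.neighborFinset s ∩ G.neighborFinset u).card : ℚ)) else 0 := by
    rw [hT1]
    refine Finset.sum_congr rfl fun s _ => ?_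
    rw [Finset.sum_comm]
    refine Finset.sum_congr rfl fun u _ => ?_
    by_cases h : G.Adj s u
    · have hstep : (∑ t, ∑ v,
          if G.Adj s t ∧ G.Adj u v ∧ s ≠ u ∧ s ≠ v ∧ t ≠ u ∧ t ≠ v
          then a G s u * (k s + k u) else 0)
          = (k s + k u) * ∑ t, ∑ v,
            (if G.Adj s t ∧ G.Adj u v ∧ s ≠ u ∧ s ≠ v ∧ t ≠ u ∧ t ≠ v then (1:ℚ) else 0) := by
        rw [Finset.mul_sum]
        refine Finset.sum_congr rfl fun t _ => ?_
        rw [Finset.mul_sum]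
        refine Finset.sum_congr rfl fun v _ => ?_
        split <;> simp [a, h, mul_comm]
      rw [hstep, count_lem G h, if_pos h]
    · simp [a, h]
  -- split the three Qsums and conclude
  unfold Qsum edgeSum
  rw [div_add_div _ _ (by norm_num : (8:ℚ) ≠ 0) (by norm_num : (2:ℚ) ≠ 0)]
  rw [div_eq_div_iff (by norm_num) (by norm_num)]
  have hcombine : (∑ s, ∑ t, ∑ u, ∑ v,
      if G.Adj s t ∧ G.Adj u v ∧ s ≠ u ∧ s ≠ v ∧ t ≠ u ∧ t ≠ v then
        (a G s u + a G s v + a G t u + a G t v) * (k s + k t + k u + k v) else 0)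
      = (∑ s, ∑ t, ∑ u, ∑ v,
      if G.Adj s t ∧ G.Adj u v ∧ s ≠ u ∧ s ≠ v ∧ t ≠ u ∧ t ≠ v then
        a G s u * (k t + k v) + a G s v * (k t + k u)
          + a G t u * (k s + k v) + a G t v * (k s + k u) else 0)
      + ((∑ s, ∑ t, ∑ u, ∑ v,
      if G.Adj s t ∧ G.Adj u v ∧ s ≠ u ∧ s ≠ v ∧ t ≠ u ∧ t ≠ v then
        a G s u * (k s + k u) else 0)
      + (∑ s, ∑ t, ∑ u, ∑ v,
      if G.Adj s t ∧ G.Adj u v ∧ s ≠ u ∧ s ≠ v ∧ t ≠ u ∧ t ≠ v then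
        a G s v * (k s + k v) else 0)
      + (∑ s, ∑ t, ∑ u, ∑ v,
      if G.Adj s t ∧ G.Adj u v ∧ s ≠ u ∧ s ≠ v ∧ t ≠ u ∧ t ≠ v then
        a G t u * (k t + k u) else 0)
      + (∑ s, ∑ t, ∑ u, ∑ v,
      if G.Adj s t ∧ G.Adj u v ∧ s ≠ u ∧ s ≠ v ∧ t ≠ u ∧ t ≠ v then
        a G t v * (k t + k v) else 0)) := by
    simp only [← Finset.sum_add_distrib]
    refine Finset.sum_congr rfl fun s _ => Finset.sum_congr rfl fun t _ =>
      Finset.sum_congr rfl fun u _ => Finset.sum_congr rfl fun v _ => ?_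
    split <;> ring
  rw [hcombine, ← hT1, e2, e3, e4, hT1v]
  ring


end CrossVar
end

section
/- In any tree T, the number of subgraphs isomorphic to the path P₅ on 5 vertices equals (1/2) ∑_{st∈E} [ (k_t−1)(ξ(s)−k_t−k_s+1) + (k_s−1)(ξ(t)−k_s−k_t+1) ], where ξ(v) = ∑_{u∈Γ(v)} k_u. -/
open Finset BigOperators SimpleGraph

namespace CrossVar

variable {V : Type} [Fintype V] [DecidableEq V]

set_option linter.unusedSectionVars false
set_option linter.unreachableTactic false
set_option linter.unusedTactic false
set_option maxHeartbeats 4000000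

lemma noTri {G : SimpleGraph V} (hG : G.IsAcyclic) {a b c : V}
    (hab : G.Adj a b) (hbc : G.Adj b c) (hac : G.Adj a c) : False := by
  have h1 : (Walk.cons hac Walk.nil).IsPath := by simp [hac.ne]
  have h2 : (Walk.cons hab (Walk.cons hbc Walk.nil)).IsPath := by
    simp [hab.ne, hbc.ne, hac.ne]
  have heq := isAcyclic_iff_path_unique.1 hG ⟨_, h1⟩ ⟨_, h2⟩
  have := congrArg (fun q : G.Path a c => q.1.length) heq
  simp [Walk.length_cons] at this


lemma no4 {G : SimpleGraph V} (hG : G.IsAcyclic) {w u s t : V}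
    (hwu : G.Adj w u) (hus : G.Adj u s) (hst : G.Adj s t) (hwt : G.Adj w t)
    (hws : w ≠ s) (hut : u ≠ t) : False := by
  have h1 : (Walk.cons hwt Walk.nil).IsPath := by simp [hwt.ne]
  have h2 : (Walk.cons hwu (Walk.cons hus (Walk.cons hst Walk.nil))).IsPath := by
    simp [hwu.ne, hus.ne, hst.ne, hws, hut, hwt.ne]
  have heq := isAcyclic_iff_path_unique.1 hG ⟨_, h1⟩ ⟨_, h2⟩
  have := congrArg (fun q : G.Path w t => q.1.length) heq
  simp [Walk.length_cons] at this



abbrev Tup (V : Type) := V × V × V × V × V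

def cond (G : SimpleGraph V) [DecidableRel G.Adj] (p : Tup V) : Prop :=
  G.Adj p.2.2.1 p.2.2.2.1 ∧ G.Adj p.2.2.1 p.2.1 ∧ p.2.1 ≠ p.2.2.2.1 ∧
  G.Adj p.2.1 p.1 ∧ p.1 ≠ p.2.2.1 ∧ G.Adj p.2.2.2.1 p.2.2.2.2 ∧ p.2.2.2.2 ≠ p.2.2.1


instance (G : SimpleGraph V) [DecidableRel G.Adj] : DecidablePred (cond G) := by
  unfold cond; infer_instance


def TT (G : SimpleGraph V) [DecidableRel G.Adj] : Finset (Tup V) :=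
  univ.filter (cond G)


def rev (p : Tup V) : Tup V := (p.2.2.2.2, p.2.2.2.1, p.2.2.1, p.2.1, p.1)


def Phi (G : SimpleGraph V) [DecidableRel G.Adj] (p : Tup V) : G.Subgraph where
  verts := {p.1, p.2.1, p.2.2.1, p.2.2.2.1, p.2.2.2.2}
  Adj a b := G.Adj a b ∧ (s(a,b) = s(p.1,p.2.1) ∨ s(a,b) = s(p.2.1,p.2.2.1) ∨
      s(a,b) = s(p.2.2.1,p.2.2.2.1) ∨ s(a,b) = s(p.2.2.2.1,p.2.2.2.2))
  adj_sub h := h.1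
  edge_vert := by
    rintro a b ⟨-, h | h | h | h⟩ <;> rw [Sym2.eq_iff] at h <;>
      rcases h with ⟨rfl, rfl⟩ | ⟨rfl, rfl⟩ <;> simp
  symm := by
    constructor; rintro a b ⟨h1, h2⟩
    exact ⟨h1.symm, by rwa [Sym2.eq_swap] at h2⟩


lemma cond_distinct {G : SimpleGraph V} [DecidableRel G.Adj] (hG : G.IsAcyclic)
    {p : Tup V} (hp : cond G p) :
    p.1 ≠ p.2.1 ∧ p.1 ≠ p.2.2.1 ∧ p.1 ≠ p.2.2.2.1 ∧ p.1 ≠ p.2.2.2.2 ∧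
    p.2.1 ≠ p.2.2.1 ∧ p.2.1 ≠ p.2.2.2.1 ∧ p.2.1 ≠ p.2.2.2.2 ∧
    p.2.2.1 ≠ p.2.2.2.1 ∧ p.2.2.1 ≠ p.2.2.2.2 ∧ p.2.2.2.1 ≠ p.2.2.2.2 := by
  obtain ⟨w, u, s, t, x⟩ := p
  obtain ⟨hst, hsu, hut, huw, hws, htx, hxs⟩ := hp
  dsimp only at *
  refine ⟨huw.ne', hws, ?_, ?_, hsu.ne', hut, ?_, hst.ne, fun h => hxs h.symm, htx.ne⟩
  · -- w ≠ t
    intro h; subst h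
    exact noTri hG hsu huw hst
  · -- w ≠ x
    intro h; subst h
    exact no4 hG huw.symm hsu.symm hst htx.symm hws hut
  · -- u ≠ x
    intro h; subst h
    exact noTri hG hst htx hsu

lemma phi_iso (G : SimpleGraph V) [DecidableRel G.Adj] {p : Tup V} (hp : cond G p)
    (hd : p.1 ≠ p.2.1 ∧ p.1 ≠ p.2.2.1 ∧ p.1 ≠ p.2.2.2.1 ∧ p.1 ≠ p.2.2.2.2 ∧
    p.2.1 ≠ p.2.2.1 ∧ p.2.1 ≠ p.2.2.2.1 ∧ p.2.1 ≠ p.2.2.2.2 ∧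
    p.2.2.1 ≠ p.2.2.2.1 ∧ p.2.2.1 ≠ p.2.2.2.2 ∧ p.2.2.2.1 ≠ p.2.2.2.2) :
    Nonempty ((Phi G p).coe ≃g pathGraph 5) := by
  obtain ⟨w, u, s, t, x⟩ := p
  obtain ⟨hst, hsu, hut, huw, hws, htx, hxs⟩ := hp
  obtain ⟨d1, d2, d3, d4, d5, d6, d7, d8, d9, d10⟩ := hd
  dsimp only at *
  have e1 := hst.symm; have e2 := hsu.symm; have e3 := huw.symm; have e4 := htx.symm
  have n1 := d1.symm; have n2 := d2.symm; have n3 := d3.symm; have n4 := d4.symm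
  have n5 := d5.symm; have n6 := d6.symm; have n7 := d7.symm; have n8 := d8.symm
  have n9 := d9.symm; have n10 := d10.symm
  have hws' : s ≠ w := fun h => hws h.symm
  have hut' : t ≠ u := fun h => hut h.symm
  have hxs' : s ≠ x := fun h => hxs h.symm
  set f : Fin 5 → V := ![w, u, s, t, x] with hf
  have hfm : ∀ i, f i ∈ (Phi G (w,u,s,t,x)).verts := by
    intro i; fin_cases i <;> simp [Phi, f]
  have hinj : Function.Injective f := by
    intro i j hij
    fin_cases i <;> fin_cases j <;> simp_all [f] <;> first | rfl | (exfalso; tauto)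
  have hsurj : ∀ b : (Phi G (w,u,s,t,x)).verts, ∃ i, f i = (b : V) := by
    rintro ⟨b, hb⟩
    simp only [Phi, Set.mem_insert_iff, Set.mem_singleton_iff] at hb
    rcases hb with rfl | rfl | rfl | rfl | rfl
    · exact ⟨0, rfl⟩
    · exact ⟨1, rfl⟩
    · exact ⟨2, rfl⟩
    · exact ⟨3, rfl⟩
    · exact ⟨4, rfl⟩
  let g : Fin 5 → (Phi G (w,u,s,t,x)).verts := fun i => ⟨f i, hfm i⟩
  have hgbij : Function.Bijective g := by
    constructor
    · intro i j hij; exact hinj (congrArg Subtype.val hij)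
    · intro b; obtain ⟨i, hi⟩ := hsurj b; exact ⟨i, Subtype.ext hi⟩
  let e := Equiv.ofBijective g hgbij
  refine ⟨{ toEquiv := e.symm, map_rel_iff' := ?_ }⟩
  intro a b
  obtain ⟨i, rfl⟩ := e.surjective a
  obtain ⟨j, rfl⟩ := e.surjective b
  simp only [Equiv.symm_apply_apply]
  have : ∀ i j : Fin 5, (Phi G (w,u,s,t,x)).coe.Adj (g i) (g j) ↔
      ((pathGraph 5).Adj i j) := by
    intro i j
    rw [Subgraph.coe_adj]
    show (Phi G (w,u,s,t,x)).Adj (f i) (f j) ↔ _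
    fin_cases i <;> fin_cases j <;>
      simp_all [Phi, pathGraph_adj, Sym2.eq_iff, f] <;> tauto
  exact (this i j).symm

lemma phi_surj (G : SimpleGraph V) [DecidableRel G.Adj] (H : G.Subgraph)
    (he : Nonempty (H.coe ≃g pathGraph 5)) : ∃ p : Tup V, cond G p ∧ Phi G p = H := by
  obtain ⟨e⟩ := he
  set f : Fin 5 → V := fun i => (e.symm i : V) with hf
  have hfinj : Function.Injective f := fun i j h =>
    e.symm.injective (Subtype.ext h)
  have hfm : ∀ i, f i ∈ H.verts := fun i => (e.symm i).2
  have hadj : ∀ i j : Fin 5, H.Adj (f i) (f j) ↔ (pathGraph 5).Adj i j := by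
    intro i j
    exact (Subgraph.coe_adj H (e.symm i) (e.symm j)).symm.to_iff.trans e.symm.map_adj_iff
  refine ⟨(f 0, f 1, f 2, f 3, f 4), ⟨?_, ?_, ?_, ?_, ?_, ?_, ?_⟩, ?_⟩
  · exact H.adj_sub ((hadj 2 3).2 (pathGraph_adj.2 (by decide)))
  · exact H.adj_sub ((hadj 2 1).2 (pathGraph_adj.2 (by decide)))
  · exact fun h => (by decide : (1:Fin 5) ≠ 3) (hfinj h)
  · exact H.adj_sub ((hadj 1 0).2 (pathGraph_adj.2 (by decide)))
  · exact fun h => (by decide : (0:Fin 5) ≠ 2) (hfinj h)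
  · exact H.adj_sub ((hadj 3 4).2 (pathGraph_adj.2 (by decide)))
  · exact fun h => (by decide : (4:Fin 5) ≠ 2) (hfinj h)
  · refine Subgraph.ext ?_ ?_
    · ext v
      constructor
      · rintro (rfl | rfl | rfl | rfl | rfl) <;> exact hfm _
      · intro hv
        have hv2 : v = f (e ⟨v, hv⟩) := (congrArg Subtype.val (e.symm_apply_apply ⟨v, hv⟩)).symm
        generalize e ⟨v, hv⟩ = i at hv2
        show v ∈ ({f 0, f 1, f 2, f 3, f 4} : Set V)
        fin_cases i <;> simp [hv2]
    · ext a b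
      constructor
      · rintro ⟨hG, hs | hs | hs | hs⟩ <;> rw [Sym2.eq_iff] at hs <;>
          rcases hs with ⟨rfl, rfl⟩ | ⟨rfl, rfl⟩ <;>
          first
            | exact (hadj _ _).2 (pathGraph_adj.2 (by decide))
            | exact ((hadj _ _).2 (pathGraph_adj.2 (by decide))).symm
      · intro h
        have ha : a ∈ H.verts := H.edge_vert h
        have hb : b ∈ H.verts := H.edge_vert h.symm
        have ha2 : a = f (e ⟨a, ha⟩) := (congrArg Subtype.val (e.symm_apply_apply ⟨a, ha⟩)).symm
        have hb2 : b = f (e ⟨b, hb⟩) := (congrArg Subtype.val (e.symm_apply_apply ⟨b, hb⟩)).symm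
        generalize e ⟨a, ha⟩ = i at ha2
        generalize e ⟨b, hb⟩ = j at hb2
        subst ha2; subst hb2
        have hp := (hadj i j).1 h
        refine ⟨H.adj_sub h, ?_⟩
        rw [pathGraph_adj] at hp
        fin_cases i <;> fin_cases j <;> first
          | exact absurd hp (by decide)
          | simp [Sym2.eq_iff]

lemma phi_fiber (G : SimpleGraph V) [DecidableRel G.Adj] {p q : Tup V}
    (dp : p.1 ≠ p.2.1 ∧ p.1 ≠ p.2.2.1 ∧ p.1 ≠ p.2.2.2.1 ∧ p.1 ≠ p.2.2.2.2 ∧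
      p.2.1 ≠ p.2.2.1 ∧ p.2.1 ≠ p.2.2.2.1 ∧ p.2.1 ≠ p.2.2.2.2 ∧
      p.2.2.1 ≠ p.2.2.2.1 ∧ p.2.2.1 ≠ p.2.2.2.2 ∧ p.2.2.2.1 ≠ p.2.2.2.2)
    (dq : q.1 ≠ q.2.1 ∧ q.1 ≠ q.2.2.1 ∧ q.1 ≠ q.2.2.2.1 ∧ q.1 ≠ q.2.2.2.2 ∧
      q.2.1 ≠ q.2.2.1 ∧ q.2.1 ≠ q.2.2.2.1 ∧ q.2.1 ≠ q.2.2.2.2 ∧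
      q.2.2.1 ≠ q.2.2.2.1 ∧ q.2.2.1 ≠ q.2.2.2.2 ∧ q.2.2.2.1 ≠ q.2.2.2.2)
    (hp : cond G p) (hq : cond G q) (h : Phi G q = Phi G p) : q = p ∨ q = rev p := by
  obtain ⟨w, u, s, t, x⟩ := p
  obtain ⟨w', u', s', t', x'⟩ := q
  obtain ⟨hst, hsu, hut, huw, hws, htx, hxs⟩ := hp
  obtain ⟨hst', hsu', hut', huw', hws', htx', hxs'⟩ := hq
  obtain ⟨d1, d2, d3, d4, d5, d6, d7, d8, d9, d10⟩ := dp
  obtain ⟨e1, e2, e3, e4, e5, e6, e7, e8, e9, e10⟩ := dq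
  dsimp only at *
  have hA : ∀ a b : V, (Phi G (w',u',s',t',x')).Adj a b ↔ (Phi G (w,u,s,t,x)).Adj a b :=
    fun a b => by rw [h]
  have H1 := ((hA w' u').1 ⟨huw'.symm, Or.inl rfl⟩).2
  have H2 := ((hA u' s').1 ⟨hsu'.symm, Or.inr (Or.inl rfl)⟩).2
  have H3 := ((hA s' t').1 ⟨hst', Or.inr (Or.inr (Or.inl rfl))⟩).2
  have H4 := ((hA t' x').1 ⟨htx', Or.inr (Or.inr (Or.inr rfl))⟩).2
  dsimp only at H1 H2 H3 H4
  rw [Sym2.eq_iff, Sym2.eq_iff, Sym2.eq_iff, Sym2.eq_iff] at H1 H2 H3 H4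
  unfold rev
  rcases H2 with (⟨h21,h22⟩|⟨h21,h22⟩)|(⟨h21,h22⟩|⟨h21,h22⟩)|(⟨h21,h22⟩|⟨h21,h22⟩)|(⟨h21,h22⟩|⟨h21,h22⟩) <;>
  rcases H3 with (⟨h31,h32⟩|⟨h31,h32⟩)|(⟨h31,h32⟩|⟨h31,h32⟩)|(⟨h31,h32⟩|⟨h31,h32⟩)|(⟨h31,h32⟩|⟨h31,h32⟩) <;>
    subst_vars <;> simp_all <;>
  rcases H1 with (⟨h11,h12⟩|⟨h11,h12⟩)|(⟨h11,h12⟩|⟨h11,h12⟩)|(⟨h11,h12⟩|⟨h11,h12⟩)|(⟨h11,h12⟩|⟨h11,h12⟩) <;>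
  rcases H4 with (⟨h41,h42⟩|⟨h41,h42⟩)|(⟨h41,h42⟩|⟨h41,h42⟩)|(⟨h41,h42⟩|⟨h41,h42⟩)|(⟨h41,h42⟩|⟨h41,h42⟩) <;>
    subst_vars <;> simp_all

lemma deg_eq_sum (G : SimpleGraph V) [DecidableRel G.Adj] (v : V) :
    deg G v = ∑ w, if G.Adj v w then (1:ℚ) else 0 := by
  rw [deg, degree, neighborFinset_eq_filter, Finset.card_filter]
  push_cast
  exact Finset.sum_congr rfl fun w _ => by split <;> simp


lemma deg_sub_one (G : SimpleGraph V) [DecidableRel G.Adj] {v z : V} (hz : G.Adj v z) :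
    deg G v - 1 = ∑ w, if G.Adj v w ∧ w ≠ z then (1:ℚ) else 0 := by
  have key : ∀ w : V, (if G.Adj v w then (1:ℚ) else 0) =
      (if G.Adj v w ∧ w ≠ z then (1:ℚ) else 0) + (if w = z then 1 else 0) := by
    intro w
    by_cases hw : w = z <;> by_cases ha : G.Adj v w <;> subst_vars <;> simp_all
  rw [deg_eq_sum, Finset.sum_congr rfl (fun w _ => key w), Finset.sum_add_distrib]
  simp


lemma xi_sub (G : SimpleGraph V) [DecidableRel G.Adj] {s t : V} (ht : G.Adj s t) :
    xi G s - deg G t - deg G s + 1 =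
      ∑ u, if G.Adj s u ∧ u ≠ t then (deg G u - 1) else 0 := by
  have h1 : xi G s = ∑ u, if G.Adj s u then deg G u else 0 := by
    rw [xi, neighborFinset_eq_filter, Finset.sum_filter]
  have key : ∀ u : V, (if G.Adj s u then deg G u else 0) =
      (if G.Adj s u ∧ u ≠ t then (deg G u - 1) else 0)
      + (if G.Adj s u ∧ u ≠ t then (1:ℚ) else 0) + (if u = t then deg G t else 0) := by
    intro u
    by_cases hw : u = t <;> by_cases ha : G.Adj s u <;> subst_vars <;> simp_all <;> ring
  rw [h1, Finset.sum_congr rfl (fun u _ => key u), Finset.sum_add_distrib,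
    Finset.sum_add_distrib, ← deg_sub_one G ht]
  simp
  ring


lemma step (G : SimpleGraph V) [DecidableRel G.Adj] {s t : V} (hst : G.Adj s t) :
    (deg G t - 1) * (xi G s - deg G t - deg G s + 1) =
      ∑ x, ∑ u, ∑ w, if (G.Adj t x ∧ x ≠ s) ∧ (G.Adj s u ∧ u ≠ t) ∧ (G.Adj u w ∧ w ≠ s)
        then (1:ℚ) else 0 := by
  rw [deg_sub_one G hst.symm, xi_sub G hst]
  have inner : ∀ u : V, (if G.Adj s u ∧ u ≠ t then (deg G u - 1) else 0) =
      ∑ w, if (G.Adj s u ∧ u ≠ t) ∧ (G.Adj u w ∧ w ≠ s) then (1:ℚ) else 0 := by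
    intro u
    by_cases hu : G.Adj s u ∧ u ≠ t
    · rw [if_pos hu, deg_sub_one G hu.1.symm]
      exact Finset.sum_congr rfl fun w _ => by
        by_cases hw : G.Adj u w ∧ w ≠ s <;> simp [hw, hu]
    · rw [if_neg hu]
      symm
      refine Finset.sum_eq_zero fun w _ => by simp [hu]
  rw [Finset.sum_congr rfl (fun u _ => inner u), Finset.sum_mul_sum]
  refine Finset.sum_congr rfl fun x _ => ?_
  refine Finset.sum_congr rfl fun u _ => ?_
  rw [Finset.mul_sum]
  refine Finset.sum_congr rfl fun w _ => ?_
  by_cases h1 : G.Adj t x ∧ x ≠ s <;>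
    by_cases h2 : (G.Adj s u ∧ u ≠ t) ∧ (G.Adj u w ∧ w ≠ s) <;>
    simp [h1, h2]

lemma card_TT (G : SimpleGraph V) [DecidableRel G.Adj] :
    ((TT G).card : ℚ) = ∑ s, ∑ t, if G.Adj s t then
      (deg G t - 1) * (xi G s - deg G t - deg G s + 1) else 0 := by
  have h0 : ((TT G).card : ℚ) = ∑ p : Tup V, if cond G p then (1:ℚ) else 0 := by
    rw [TT, Finset.card_filter, Nat.cast_sum]
    exact Finset.sum_congr rfl fun p _ => by split <;> simp
  have swap : (∑ p : Tup V, if cond G p then (1:ℚ) else 0)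
      = ∑ s, ∑ t, ∑ x, ∑ u, ∑ w, if cond G (w,u,s,t,x) then (1:ℚ) else 0 := by
    have h1 : (∑ q : Tup V,
          if cond G (q.2.2.2.2, q.2.2.2.1, q.1, q.2.1, q.2.2.1) then (1:ℚ) else 0)
        = ∑ s, ∑ t, ∑ x, ∑ u, ∑ w, if cond G (w,u,s,t,x) then (1:ℚ) else 0 := by
      simp only [Fintype.sum_prod_type]
    rw [← h1]
    exact Fintype.sum_equiv
      ⟨fun p => (p.2.2.1, p.2.2.2.1, p.2.2.2.2, p.2.1, p.1),
       fun q => (q.2.2.2.2, q.2.2.2.1, q.1, q.2.1, q.2.2.1),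
       fun p => rfl, fun q => rfl⟩ _ _ (fun p => rfl)
  rw [h0, swap]
  refine Finset.sum_congr rfl fun s _ => Finset.sum_congr rfl fun t _ => ?_
  by_cases hst : G.Adj s t
  · rw [if_pos hst, step G hst]
    refine Finset.sum_congr rfl fun x _ => Finset.sum_congr rfl fun u _ =>
      Finset.sum_congr rfl fun w _ => ?_
    refine if_congr ?_ rfl rfl
    simp only [cond]
    constructor
    · rintro ⟨-, h2, h3, h4, h5, h6, h7⟩; exact ⟨⟨h6, h7⟩, ⟨h2, h3⟩, ⟨h4, h5⟩⟩
    · rintro ⟨⟨h6, h7⟩, ⟨h2, h3⟩, ⟨h4, h5⟩⟩; exact ⟨hst, h2, h3, h4, h5, h6, h7⟩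
  · rw [if_neg hst]
    refine Finset.sum_eq_zero fun x _ => Finset.sum_eq_zero fun u _ =>
      Finset.sum_eq_zero fun w _ => by simp [cond, hst]

lemma rev_mem_TT (G : SimpleGraph V) [DecidableRel G.Adj] {p : Tup V}
    (hp : p ∈ TT G) : rev p ∈ TT G := by
  simp only [TT, Finset.mem_filter, Finset.mem_univ, true_and] at hp ⊢
  obtain ⟨w, u, s, t, x⟩ := p
  obtain ⟨hst, hsu, hut, huw, hws, htx, hxs⟩ := hp
  exact ⟨hsu, hst, hut.symm, htx, hxs, huw, hws⟩

lemma phi_rev (G : SimpleGraph V) [DecidableRel G.Adj] (p : Tup V) :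
    Phi G (rev p) = Phi G p := by
  obtain ⟨w, u, s, t, x⟩ := p
  refine Subgraph.ext ?_ ?_
  · ext v
    simp only [Phi, rev, Set.mem_insert_iff, Set.mem_singleton_iff]
    tauto
  · ext a b
    simp only [Phi, rev]
    constructor <;> rintro ⟨h1, h2⟩ <;> refine ⟨h1, ?_⟩ <;>
      simp only [Sym2.eq_iff] at h2 ⊢ <;> tauto

theorem stmt19 (G : SimpleGraph V) [DecidableRel G.Adj] (hT : G.IsTree) :
    (copyCount G (pathGraph 5) : ℚ) =
      (1 / 2) * edgeSum G (fun s t =>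
        (deg G t - 1) * (xi G s - deg G t - deg G s + 1)
          + (deg G s - 1) * (xi G t - deg G s - deg G t + 1)) := by
  classical
  have hG := hT.2
  have hmem : ∀ {p : Tup V}, p ∈ TT G → cond G p := by
    intro p hp
    simpa [TT] using hp
  set I : Finset G.Subgraph := (TT G).image (Phi G) with hI
  have hset : {H : G.Subgraph | Nonempty (H.coe ≃g pathGraph 5)} = ↑I := by
    ext H
    simp only [Set.mem_setOf_eq, hI, Finset.coe_image, Set.mem_image, Finset.mem_coe]
    constructor
    · intro he
      obtain ⟨p, hp, hPhi⟩ := phi_surj G H he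
      exact ⟨p, by simp [TT, hp], hPhi⟩
    · rintro ⟨p, hp, rfl⟩
      exact phi_iso G (hmem hp) (cond_distinct hG (hmem hp))
  have hcount : copyCount G (pathGraph 5) = I.card := by
    rw [copyCount]
    have h2 : Nat.card {H : G.Subgraph // Nonempty (H.coe ≃g pathGraph 5)}
        = Nat.card ↥{H : G.Subgraph | Nonempty (H.coe ≃g pathGraph 5)} := rfl
    rw [h2, hset, Nat.card_coe_set_eq, Set.ncard_coe_finset]
  have hfib : ∀ p ∈ TT G, (TT G).filter (fun q => Phi G q = Phi G p) = {p, rev p} := by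
    intro p hp
    ext q
    simp only [Finset.mem_filter, Finset.mem_insert, Finset.mem_singleton]
    constructor
    · rintro ⟨hq, hPhi⟩
      exact phi_fiber G (cond_distinct hG (hmem hp)) (cond_distinct hG (hmem hq))
        (hmem hp) (hmem hq) hPhi
    · rintro (rfl | rfl)
      · exact ⟨hp, rfl⟩
      · exact ⟨rev_mem_TT G hp, phi_rev G p⟩
  have hcard2 : (TT G).card = 2 * I.card := by
    rw [Finset.card_eq_sum_card_image (Phi G) (TT G)]
    have hconst : ∀ b ∈ I, ((TT G).filter (fun a => Phi G a = b)).card = 2 := by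
      intro b hb
      obtain ⟨p, hp, rfl⟩ := Finset.mem_image.1 hb
      rw [hfib p hp, Finset.card_insert_of_notMem, Finset.card_singleton]
      have hd := cond_distinct hG (hmem hp)
      simp only [Finset.mem_singleton]
      intro hcon
      exact hd.2.2.2.1 (congrArg Prod.fst hcon)
    rw [← hI, Finset.sum_congr rfl hconst, Finset.sum_const, smul_eq_mul, mul_comm]
  -- algebraic side
  have hsum : (∑ s, ∑ t, if G.Adj s t then
        ((deg G t - 1) * (xi G s - deg G t - deg G s + 1)
          + (deg G s - 1) * (xi G t - deg G s - deg G t + 1)) else 0)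
      = 2 * ((TT G).card : ℚ) := by
    have hsplit : ∀ s t : V, (if G.Adj s t then
        ((deg G t - 1) * (xi G s - deg G t - deg G s + 1)
          + (deg G s - 1) * (xi G t - deg G s - deg G t + 1)) else 0)
        = (if G.Adj s t then (deg G t - 1) * (xi G s - deg G t - deg G s + 1) else 0)
          + (if G.Adj s t then (deg G s - 1) * (xi G t - deg G s - deg G t + 1) else 0) := by
      intro s t; split <;> simp
    calc (∑ s, ∑ t, if G.Adj s t then
        ((deg G t - 1) * (xi G s - deg G t - deg G s + 1)
          + (deg G s - 1) * (xi G t - deg G s - deg G t + 1)) else 0)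
        = (∑ s, ∑ t, if G.Adj s t then
            (deg G t - 1) * (xi G s - deg G t - deg G s + 1) else 0)
          + (∑ s, ∑ t, if G.Adj s t then
            (deg G s - 1) * (xi G t - deg G s - deg G t + 1) else 0) := by
          rw [← Finset.sum_add_distrib]
          refine Finset.sum_congr rfl fun s _ => ?_
          rw [← Finset.sum_add_distrib]
          exact Finset.sum_congr rfl fun t _ => hsplit s t
      _ = ((TT G).card : ℚ) + ((TT G).card : ℚ) := by
          rw [← card_TT]
          congr 1
          rw [Finset.sum_comm,
            Finset.sum_congr rfl (fun y (_ : y ∈ Finset.univ) =>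
              Finset.sum_congr rfl fun x _ => if_congr (G.adj_comm x y) rfl rfl),
            ← card_TT]
      _ = 2 * ((TT G).card : ℚ) := by ring
  rw [hcount, edgeSum, hsum, hcard2]
  push_cast
  ring

end CrossVar
end
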